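/- Fix d ≥ 1, A ∈ 𝓡, r ≥ 0, and T ∈ (0,∞) with m(T) > 0. Suppose Assumption 1.1 holds, Assumption 3.2 holds at T with constant C, and the claim vectors {X^(i), i ≥ 1} are RD_A with RD constants x₀ > 0 and K > 0. Define J_x(T) := Σ_{i≥1} 1{X^(i) e^{−r τ_i} ∈ x·A, τ_i ≤ T} and Λ_x := E[J_x(T)] = ∫_{[0,T]} P(X e^{−r s} ∈ x·A) ν(ds). Then there exists x₁ > 0 such that for every x ≥ x₁: E[ J_x(T) (J_x(T) − 1) ] ≤ C · K · Λ_x². -/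

import Mathlib

open MeasureTheory ProbabilityTheory Filter Topology Set
open scoped Pointwise ENNReal NNReal

noncomputable section

/-- The family `𝓡` of open increasing subsets of `ℝ^d` with convex complement,
whose closure avoids the origin. -/
def InRfam (d : ℕ) (A : Set (Fin d → ℝ)) : Prop :=
  IsOpen A ∧ (∀ x ∈ A, ∀ z : Fin d → ℝ, (∀ i, 0 ≤ z i) → x + z ∈ A) ∧
    Convex ℝ Aᶜ ∧ (0 : Fin d → ℝ) ∉ closure A

/-- The functional `z ↦ z_A = sup {u > 0 : z ∈ u • A}` (real `sSup`, so `sup ∅ = 0`). -/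
def projA {d : ℕ} (A : Set (Fin d → ℝ)) (z : Fin d → ℝ) : ℝ :=
  sSup {u : ℝ | 0 < u ∧ z ∈ u • A}

/-- The tail `Ḡ_A(x) = P(Z_A > x)` of the one-dimensional distribution `G_A`
associated with a distribution `G` on `ℝ^d` and a set `A ∈ 𝓡`. -/
def tailA {d : ℕ} (A : Set (Fin d → ℝ)) (G : Measure (Fin d → ℝ)) (x : ℝ) : ℝ :=
  (G {z | x < projA A z}).toReal

/-- Product of two measures (via `bind`, no instance assumptions). -/
def mprod {α β : Type*} [MeasurableSpace α] [MeasurableSpace β]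
    (μ : Measure α) (ν : Measure β) : Measure (α × β) :=
  μ.bind fun a => ν.map (Prod.mk a)

/-- Tail at `x` of `Z¹_A + Z²_A` for independent `Z¹ ∼ G₁`, `Z² ∼ G₂`. -/
def tail2A {d : ℕ} (A : Set (Fin d → ℝ)) (G₁ G₂ : Measure (Fin d → ℝ)) (x : ℝ) : ℝ :=
  ((mprod G₁ G₂) {p | x < projA A p.1 + projA A p.2}).toReal

/-- `G ∈ 𝒮_A`: the distribution `G_A` has everywhere positive tail and is
subexponential, i.e. `P(Z¹_A + Z²_A > x) ∼ 2 Ḡ_A(x)` for independent copies. -/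
def SubexpA {d : ℕ} (A : Set (Fin d → ℝ)) (G : Measure (Fin d → ℝ)) : Prop :=
  (∀ x : ℝ, 0 < tailA A G x) ∧
    Tendsto (fun x => tail2A A G G x / tailA A G x) atTop (𝓝 2)

/-- Convolution: the law of the sum of independent draws from `μ` and `ν`. -/
def mconv {d : ℕ} (μ ν : Measure (Fin d → ℝ)) : Measure (Fin d → ℝ) :=
  (mprod μ ν).map fun p => p.1 + p.2

/-- Regression dependence with explicit constants `x₀, K`, in integrated form:
for every index `i`, finite nonempty `J` not containing `i`, level `xi > x₀` and
measurable set `S` of conditioning values all `> x₀`,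
`P(Z_i > xi, (Z_j)_{j∈J} ∈ S) ≤ K · Ḡ_i(xi) · P((Z_j)_{j∈J} ∈ S)`. -/
def RDwith {Ω : Type*} [MeasurableSpace Ω] (P : Measure Ω) (x₀ K : ℝ)
    {ι : Type*} (Z : ι → Ω → ℝ) : Prop :=
  ∀ i : ι, ∀ J : Finset ι, J.Nonempty → i ∉ J → ∀ xi : ℝ, x₀ < xi →
    ∀ S : Set (J → ℝ), MeasurableSet S → (∀ v ∈ S, ∀ j : J, x₀ < v j) →
      (P {ω | xi < Z i ω ∧ (fun j : J => Z j.1 ω) ∈ S}).toReal ≤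
        K * (P {ω | xi < Z i ω}).toReal * (P {ω | (fun j : J => Z j.1 ω) ∈ S}).toReal

/-- Regression dependence (`RD`). -/
def RD {Ω : Type*} [MeasurableSpace Ω] (P : Measure Ω) {ι : Type*} (Z : ι → Ω → ℝ) : Prop :=
  ∃ x₀ > (0 : ℝ), ∃ K > (0 : ℝ), RDwith P x₀ K Z

/-- `RD_A` for random vectors: the projections `Z^{(i)}_A` are `RD`. -/
def RDA {Ω : Type*} [MeasurableSpace Ω] (P : Measure Ω) {d : ℕ} (A : Set (Fin d → ℝ))
    {ι : Type*} (Z : ι → Ω → Fin d → ℝ) : Prop :=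
  RD P fun i ω => projA A (Z i ω)

/-- Quasi asymptotic independence (`QAI`). -/
def QAI {Ω : Type*} [MeasurableSpace Ω] (P : Measure Ω) {ι : Type*} (Z : ι → Ω → ℝ) : Prop :=
  ∀ i j : ι, i ≠ j →
    Tendsto (fun x : ℝ => (P {ω | x < Z i ω ∧ x < Z j ω}).toReal /
      ((P {ω | x < Z i ω}).toReal + (P {ω | x < Z j ω}).toReal)) atTop (𝓝 0)

/-- `QAI_A` for random vectors: the projections `Z^{(i)}_A` are `QAI`. -/
def QAIA {Ω : Type*} [MeasurableSpace Ω] (P : Measure Ω) {d : ℕ} (A : Set (Fin d → ℝ))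
    {ι : Type*} (Z : ι → Ω → Fin d → ℝ) : Prop :=
  QAI P fun i ω => projA A (Z i ω)

/-- The consistent variation class `𝒞` for a tail function `g`. -/
def ClassC (g : ℝ → ℝ) : Prop :=
  Tendsto (fun b : ℝ => limsup (fun x => g (b * x) / g x) atTop) (𝓝[<] (1 : ℝ)) (𝓝 1)

/-- The positively decreasing class `𝒫_𝒟` for a tail function `g`. -/
def ClassPD (g : ℝ → ℝ) : Prop :=
  ∃ v > (1 : ℝ), limsup (fun x => g (v * x) / g x) atTop < 1

/-- Upper Matuszewska index of a tail function. -/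
def Jplus (g : ℝ → ℝ) : ℝ :=
  -limUnder atTop fun v : ℝ => Real.log (liminf (fun x => g (v * x) / g x) atTop) / Real.log v

/-- Lower Matuszewska index of a tail function. -/
def Jminus (g : ℝ → ℝ) : ℝ :=
  -limUnder atTop fun v : ℝ => Real.log (limsup (fun x => g (v * x) / g x) atTop) / Real.log v

/-- `F ∈ MRV(α, μ)` with associated regularly varying tail `Vbar`: `Vbar` is the
tail of a distribution on `ℝ`, regularly varying with index `−α`; `μ` is a nonzero
measure, finite on Borel sets at positive distance from the origin; and
`P(X ∈ x • B)/Vbar x → μ(B)` for all such `B` with `μ(∂B) = 0`. -/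
def IsMRV {d : ℕ} (F : Measure (Fin d → ℝ)) (α : ℝ) (μ : Measure (Fin d → ℝ))
    (Vbar : ℝ → ℝ) : Prop :=
  (∃ V : Measure ℝ, IsProbabilityMeasure V ∧ ∀ x : ℝ, Vbar x = (V (Ioi x)).toReal) ∧
    (∀ᶠ x in atTop, 0 < Vbar x) ∧
    (∀ t : ℝ, 0 < t → Tendsto (fun x => Vbar (t * x) / Vbar x) atTop (𝓝 (t ^ (-α)))) ∧
    μ ≠ 0 ∧
    (∀ B : Set (Fin d → ℝ), MeasurableSet B → (∃ ε > (0 : ℝ), ∀ z ∈ B, ε ≤ ‖z‖) → μ B ≠ ⊤) ∧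
    (∀ B : Set (Fin d → ℝ), MeasurableSet B → (∃ ε > (0 : ℝ), ∀ z ∈ B, ε ≤ ‖z‖) →
      μ (frontier B) = 0 →
      Tendsto (fun x => (F (x • B)).toReal / Vbar x) atTop (𝓝 ((μ B).toReal)))

/-- Second factorial moment measure `α⁽²⁾` of the point process with points `τ i`:
the mean measure of the off-diagonal pairs `(τ i, τ j)`, `i ≠ j`. -/
def secondFactorial {Ω : Type*} [MeasurableSpace Ω] (P : Measure Ω) (τ : ℕ → Ω → ℝ) :
    Measure (ℝ × ℝ) :=
  Measure.sum fun p : {p : ℕ × ℕ // p.1 ≠ p.2} =>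
    P.map fun ω => (τ p.1.1 ω, τ p.1.2 ω)

/-- The product measure `ν × ν`, where `ν(B) = ∑ᵢ P(τᵢ ∈ B)` is the mean measure. -/
def nuProd {Ω : Type*} [MeasurableSpace Ω] (P : Measure Ω) (τ : ℕ → Ω → ℝ) :
    Measure (ℝ × ℝ) :=
  Measure.sum fun p : ℕ × ℕ => mprod (P.map (τ p.1)) (P.map (τ p.2))

/-- Assumption 3.2 at horizon `T` with constant `C`:
`α⁽²⁾(B) ≤ C · (ν × ν)(B)` for every Borel `B ⊆ [0,T]²`. -/
def Assumption32 {Ω : Type*} [MeasurableSpace Ω] (P : Measure Ω) (τ : ℕ → Ω → ℝ)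
    (T C : ℝ) : Prop :=
  ∀ B : Set (ℝ × ℝ), MeasurableSet B → B ⊆ Icc (0 : ℝ) T ×ˢ Icc (0 : ℝ) T →
    secondFactorial P τ B ≤ ENNReal.ofReal C * nuProd P τ B

/-- Discounted aggregate claims up to a finite time `T`. -/
def Dfin {Ω : Type*} {d : ℕ} (r : ℝ) (X : ℕ → Ω → Fin d → ℝ) (τ : ℕ → Ω → ℝ)
    (T : ℝ) (ω : Ω) : Fin d → ℝ :=
  ∑' i : ℕ, Set.indicator {ω' | τ i ω' ≤ T} (fun ω' => Real.exp (-(r * τ i ω')) • X i ω') ω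

/-- Discounted aggregate claims over the infinite time horizon. -/
def Dinf {Ω : Type*} {d : ℕ} (r : ℝ) (X : ℕ → Ω → Fin d → ℝ) (τ : ℕ → Ω → ℝ)
    (ω : Ω) : Fin d → ℝ :=
  ∑' i : ℕ, Real.exp (-(r * τ i ω)) • X i ω

/-- `J_x(T)`: the number of discounted claims entering `x • A` by time `T`. -/
def Jcount {Ω : Type*} {d : ℕ} (r : ℝ) (X : ℕ → Ω → Fin d → ℝ) (τ : ℕ → Ω → ℝ)
    (A : Set (Fin d → ℝ)) (T x : ℝ) (ω : Ω) : ℝ≥0∞ :=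
  ∑' i : ℕ,
    Set.indicator {ω' | τ i ω' ≤ T ∧ Real.exp (-(r * τ i ω')) • X i ω' ∈ x • A}
      (fun _ => (1 : ℝ≥0∞)) ω

/-- Pathwise discounted stochastic integral `∫₀ᵗ e^{−rs} B(ds)
  = e^{−rt} B(t) + r ∫₀ᵗ e^{−rs} B(s) ds`. -/
def discBM {Ω : Type*} (r : ℝ) (Bi : ℝ → Ω → ℝ) (t : ℝ) (ω : Ω) : ℝ :=
  Real.exp (-(r * t)) * Bi t ω + r * ∫ s in (0 : ℝ)..t, Real.exp (-(r * s)) * Bi s ω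

/-- The insurer's surplus process `U(t)`. -/
def surplus {Ω : Type*} {d : ℕ} (r x : ℝ) (l : Fin d → ℝ) (c : Fin d → ℝ → Ω → ℝ)
    (δv : Fin d → ℝ) (Bm : Fin d → ℝ → Ω → ℝ) (X : ℕ → Ω → Fin d → ℝ) (τ : ℕ → Ω → ℝ)
    (t : ℝ) (ω : Ω) : Fin d → ℝ :=
  fun k => x * l k + (∫ s in (0 : ℝ)..t, Real.exp (-(r * s)) * c k s ω)
    + δv k * discBM r (Bm k) t ω - Dfin r X τ t ω k

lemma smul_mem_mono {d : ℕ} {A : Set (Fin d → ℝ)} (hA : InRfam d A)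
    {z : Fin d → ℝ} (hz : ∀ k, 0 ≤ z k) {u v : ℝ} (hu : 0 < u) (huv : u ≤ v)
    (hzv : z ∈ v • A) : z ∈ u • A := by
  have hv : 0 < v := lt_of_lt_of_le hu huv
  rw [mem_smul_set_iff_inv_smul_mem₀ hv.ne'] at hzv
  rw [mem_smul_set_iff_inv_smul_mem₀ hu.ne']
  have key : u⁻¹ • z = v⁻¹ • z + (u⁻¹ - v⁻¹) • z := by
    rw [← add_smul]; ring_nf
  rw [key]
  exact hA.2.1 _ hzv _ (fun k => by
    have : (0:ℝ) ≤ u⁻¹ - v⁻¹ := sub_nonneg.2 (by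
      exact inv_anti₀ hu huv)
    simpa using mul_nonneg this (hz k))

lemma projA_bddAbove {d : ℕ} {A : Set (Fin d → ℝ)} (hA : InRfam d A) (z : Fin d → ℝ) :
    BddAbove {u : ℝ | 0 < u ∧ z ∈ u • A} := by
  have h0 : (0 : Fin d → ℝ) ∉ closure A := hA.2.2.2
  rw [Metric.mem_closure_iff] at h0
  push_neg at h0
  obtain ⟨ε, hε, hball⟩ := h0
  refine ⟨‖z‖ / ε, fun u hu => ?_⟩
  obtain ⟨hu0, hmem⟩ := hu
  rw [mem_smul_set_iff_inv_smul_mem₀ hu0.ne'] at hmem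
  have := hball _ hmem
  rw [dist_zero_left, norm_smul, norm_inv, Real.norm_eq_abs, abs_of_pos hu0] at this
  rw [le_div_iff₀ hε]
  calc u * ε ≤ u * (u⁻¹ * ‖z‖) := by
        exact mul_le_mul_of_nonneg_left this hu0.le
    _ = ‖z‖ := by field_simp

lemma mem_smul_iff_lt_projA {d : ℕ} {A : Set (Fin d → ℝ)} (hA : InRfam d A)
    {z : Fin d → ℝ} (hz : ∀ k, 0 ≤ z k) {u : ℝ} (hu : 0 < u) :
    z ∈ u • A ↔ u < projA A z := by
  constructor
  · intro hmem
    -- find v > u with z ∈ v • A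
    have hcont : ContinuousAt (fun v : ℝ => v⁻¹ • z) u :=
      ((continuousAt_inv₀ hu.ne').smul continuousAt_const)
    have hAopen : IsOpen A := hA.1
    have hmem' : (fun v : ℝ => v⁻¹ • z) u ∈ A := by
      rwa [mem_smul_set_iff_inv_smul_mem₀ hu.ne'] at hmem
    have hnhds : ∀ᶠ v in 𝓝 u, v⁻¹ • z ∈ A :=
      hcont.eventually_mem (hAopen.mem_nhds hmem')
    have hgt : ∀ᶠ v in 𝓝[>] u, v⁻¹ • z ∈ A :=
      eventually_nhdsWithin_of_eventually_nhds hnhds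
    obtain ⟨v, hvA, hv⟩ := (hgt.and self_mem_nhdsWithin).exists
    have hv' : v ∈ {u : ℝ | 0 < u ∧ z ∈ u • A} :=
      ⟨hu.trans hv, by rwa [mem_smul_set_iff_inv_smul_mem₀ (hu.trans hv).ne']⟩
    exact lt_of_lt_of_le hv (le_csSup (projA_bddAbove hA z) hv')
  · intro hlt
    have hne : {u : ℝ | 0 < u ∧ z ∈ u • A}.Nonempty := by
      by_contra hemp
      rw [Set.not_nonempty_iff_eq_empty] at hemp
      rw [projA, hemp, Real.sSup_empty] at hlt
      exact absurd hlt (not_lt.2 hu.le)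
    obtain ⟨v, hvS, huv⟩ := exists_lt_of_lt_csSup hne hlt
    exact smul_mem_mono hA hz hu huv.le hvS.2


lemma count_pairs_le {c : ℕ → ℝ≥0∞} (hc : ∀ i, c i ≤ 1) :
    (∑' i, c i) * ((∑' i, c i) - 1) ≤
      ∑' p : {p : ℕ × ℕ // p.1 ≠ p.2}, c p.1.1 * c p.1.2 := by
  classical
  set t := ∑' i, c i with ht
  have hsub : ∑' p : {p : ℕ × ℕ // p.1 ≠ p.2}, c p.1.1 * c p.1.2 =
      ∑' p : ℕ × ℕ, {p : ℕ × ℕ | p.1 ≠ p.2}.indicator (fun p => c p.1 * c p.2) p := by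
    exact tsum_subtype {p : ℕ × ℕ | p.1 ≠ p.2} (fun p => c p.1 * c p.2)
  rw [hsub, ENNReal.tsum_prod']
  have hinner : ∀ i : ℕ, (∑' j : ℕ,
      {p : ℕ × ℕ | p.1 ≠ p.2}.indicator (fun p => c p.1 * c p.2) (i, j)) = c i * (t - c i) := by
    intro i
    have h1 : ∀ j : ℕ, {p : ℕ × ℕ | p.1 ≠ p.2}.indicator (fun p => c p.1 * c p.2) (i, j)
        = c i * (if j = i then 0 else c j) := by
      intro j
      by_cases h : j = i
      · subst h; simp [Set.indicator_apply]
      · rw [Set.indicator_of_mem (by simpa [ne_comm] using h), if_neg h]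
    simp_rw [h1]
    rw [ENNReal.tsum_mul_left]
    congr 1
    have h2 := ENNReal.tsum_eq_add_tsum_ite (f := c) i
    rw [ht, h2, ENNReal.add_sub_cancel_left ((hc i).trans_lt ENNReal.one_lt_top).ne]
    exact tsum_congr fun j => by split_ifs <;> rfl
  calc t * (t - 1) = ∑' i, c i * (t - 1) := by rw [ENNReal.tsum_mul_right]
    _ ≤ ∑' i, c i * (t - c i) := by
        refine ENNReal.tsum_le_tsum fun i => ?_
        exact mul_le_mul_right (tsub_le_tsub_left (hc i) t) _
    _ = _ := by
        refine tsum_congr fun i => ?_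
        rw [hinner i]

lemma indicator_prod_mul {S₁ S₂ : Set ℝ} {h₁ h₂ : ℝ → ℝ≥0∞} (p : ℝ × ℝ) :
    (S₁ ×ˢ S₂).indicator (fun q => h₁ q.1 * h₂ q.2) p
      = S₁.indicator h₁ p.1 * S₂.indicator h₂ p.2 := by
  classical
  by_cases h1 : p.1 ∈ S₁ <;> by_cases h2 : p.2 ∈ S₂ <;>
    simp [Set.indicator_apply, Set.mem_prod, h1, h2]

lemma toReal3 {a b c : ℝ≥0∞} {K : ℝ} (hK : 0 ≤ K) (ha : a ≠ ⊤) (hb : b ≠ ⊤) (hc : c ≠ ⊤)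
    (h : a.toReal ≤ K * b.toReal * c.toReal) : a ≤ ENNReal.ofReal K * b * c := by
  calc a = ENNReal.ofReal a.toReal := (ENNReal.ofReal_toReal ha).symm
    _ ≤ ENNReal.ofReal (K * b.toReal * c.toReal) := ENNReal.ofReal_le_ofReal h
    _ = ENNReal.ofReal K * b * c := by
        rw [ENNReal.ofReal_mul (by positivity), ENNReal.ofReal_mul hK,
          ENNReal.ofReal_toReal hb, ENNReal.ofReal_toReal hc]

lemma mprod_eq_prod {α β : Type*} [MeasurableSpace α] [MeasurableSpace β]
    (μ : Measure α) (ν : Measure β) : mprod μ ν = μ.prod ν := by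
  rw [Measure.prod_def]; rfl

/-- Relation (3.5-15) in the proof of Theorem 3.1: for all large `x`,
`E[J_x(T)(J_x(T) − 1)] ≤ C K Λ_x²`, where `Λ_x = E[J_x(T)]`. -/

theorem statement12
    {Ω : Type*} [MeasurableSpace Ω] (P : Measure Ω) [IsProbabilityMeasure P]
    {d : ℕ} (hd : 1 ≤ d) {A : Set (Fin d → ℝ)} (hA : InRfam d A)
    {r : ℝ} (hr : 0 ≤ r) {T : ℝ} (hT : 0 < T)
    (F : Measure (Fin d → ℝ)) [IsProbabilityMeasure F]
    (X : ℕ → Ω → Fin d → ℝ) (τ : ℕ → Ω → ℝ)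
    (hXmeas : ∀ i, Measurable (X i)) (hτmeas : ∀ i, Measurable (τ i))
    (hXnn : ∀ i ω k, 0 ≤ X i ω k)
    (hXdist : ∀ i, P.map (X i) = F)
    (hτnn : ∀ i ω, 0 ≤ τ i ω) (hτmono : ∀ i ω, τ i ω ≤ τ (i + 1) ω)
    (hindep : IndepFun (fun ω i => X i ω) (fun ω i => τ i ω) P)
    (hmfin : ∀ t : ℝ, (∑' i : ℕ, P {ω | τ i ω ≤ t}) ≠ ⊤)
    (hmT : 0 < ∑' i : ℕ, P {ω | τ i ω ≤ T})
    {C : ℝ} (hC : 0 ≤ C) (h32 : Assumption32 P τ T C)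
    {x₀ K : ℝ} (hx₀ : 0 < x₀) (hK : 0 < K)
    (hRD : RDwith P x₀ K (fun i ω => projA A (X i ω))) :
    ∃ x₁ : ℝ, 0 < x₁ ∧ ∀ x : ℝ, x₁ ≤ x →
      (∫⁻ ω, Jcount r X τ A T x ω * (Jcount r X τ A T x ω - 1) ∂P) ≤
        ENNReal.ofReal (C * K) *
          (∑' i : ℕ, P {ω | τ i ω ≤ T ∧ Real.exp (-(r * τ i ω)) • X i ω ∈ x • A}) ^ 2 := by
  classical
  have hx₁ : (0:ℝ) < x₀ + 1 := by linarith
  refine ⟨x₀ + 1, hx₁, fun x hx => ?_⟩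
  have hxpos : 0 < x := lt_of_lt_of_le hx₁ hx
  have hx0x : x₀ < x := by linarith
  have hxA_open : IsOpen (x • A) := hA.1.smul₀ hxpos.ne'
  set Z : ℕ → Ω → ℝ := fun i ω => projA A (X i ω) with hZdef
  set E : ℕ → Set Ω :=
    fun i => {ω | τ i ω ≤ T ∧ Real.exp (-(r * τ i ω)) • X i ω ∈ x • A} with hEdef
  have hmE : ∀ i, MeasurableSet (E i) := by
    intro i
    have h1 : MeasurableSet {ω | τ i ω ≤ T} := measurableSet_le (hτmeas i) measurable_const
    have h2 : Measurable fun ω => Real.exp (-(r * τ i ω)) • X i ω :=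
      (((hτmeas i).const_mul r).neg.exp).smul (hXmeas i)
    exact h1.inter (h2 hxA_open.measurableSet)
  -- scaling function
  set c : ℝ → ℝ := fun s => x * Real.exp (r * s) with hcdef
  have hcpos : ∀ s, 0 < c s := fun s => mul_pos hxpos (Real.exp_pos _)
  have hcx : ∀ s, 0 ≤ s → x₀ < c s := by
    intro s hs
    have h1 : (1:ℝ) ≤ Real.exp (r * s) := Real.one_le_exp (mul_nonneg hr hs)
    have : x ≤ c s := le_mul_of_one_le_right hxpos.le h1
    linarith
  have hsmul_iff : ∀ (s : ℝ) (w : Fin d → ℝ),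
      Real.exp (-(r * s)) • w ∈ x • A ↔ w ∈ c s • A := by
    intro s w
    have hsc : x⁻¹ * Real.exp (-(r * s)) = (c s)⁻¹ := by
      simp only [hcdef]
      rw [mul_inv, Real.exp_neg]
    rw [mem_smul_set_iff_inv_smul_mem₀ hxpos.ne', mem_smul_set_iff_inv_smul_mem₀ (hcpos s).ne',
      smul_smul, hsc]
  -- the nonnegative orthant
  set Nn : Set (Fin d → ℝ) := {w | ∀ k, 0 ≤ w k} with hNndef
  have hNnm : MeasurableSet Nn := by
    have : Nn = ⋂ k, {w : Fin d → ℝ | 0 ≤ w k} := by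
      ext w; simp [hNndef]
    rw [this]
    exact MeasurableSet.iInter fun k =>
      measurableSet_le measurable_const (measurable_pi_apply k)
  have hFNn : F Nnᶜ = 0 := by
    rw [← hXdist 0, Measure.map_apply (hXmeas 0) hNnm.compl]
    have : X 0 ⁻¹' Nnᶜ = (∅ : Set Ω) := by
      ext ω; simp only [Set.mem_preimage, Set.mem_compl_iff, Set.mem_empty_iff_false,
        iff_false, not_not, hNndef]
      exact fun k => hXnn 0 ω k
    rw [this, measure_empty]
  -- the tail function h
  set h : ℝ → ℝ≥0∞ := fun s => F (c s • A ∩ Nn) with hhdef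
  have hanti : Antitone h := by
    intro s s' hss'
    refine measure_mono fun w hw => ?_
    obtain ⟨hw1, hw2⟩ := hw
    refine ⟨?_, hw2⟩
    have hcc : c s ≤ c s' := by
      simp only [hcdef]
      exact mul_le_mul_of_nonneg_left
        (Real.exp_le_exp.2 (mul_le_mul_of_nonneg_left hss' hr)) hxpos.le
    exact smul_mem_mono hA hw2 (hcpos s) hcc hw1
  have hhm : Measurable h := hanti.measurable
  have hPX : ∀ (i) (u : ℝ), 0 < u → P {ω | X i ω ∈ u • A} = F (u • A) := by
    intro i u hu
    rw [← hXdist i, Measure.map_apply (hXmeas i) (hA.1.smul₀ hu.ne').measurableSet]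
    rfl
  have hPh : ∀ i s, P {ω | X i ω ∈ c s • A} = h s := by
    intro i s
    rw [hPX i _ (hcpos s)]
    exact (measure_inter_conull hFNn).symm
  have hZset : ∀ (i) (u : ℝ), x₀ < u → {ω | X i ω ∈ u • A} = {ω | u < Z i ω} := by
    intro i u hu
    ext ω
    exact mem_smul_iff_lt_projA hA (hXnn i ω) (hx₀.trans hu)
  -- the RD pairwise bound
  have hpair : ∀ i j, i ≠ j → ∀ s t : ℝ, 0 ≤ s → 0 ≤ t →
      P {ω | X i ω ∈ c s • A ∧ X j ω ∈ c t • A} ≤ ENNReal.ofReal K * h s * h t := by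
    intro i j hij s t hs ht
    have hiJ : i ∉ ({j} : Finset ℕ) := by simp [hij]
    set S : Set (({j} : Finset ℕ) → ℝ) :=
      {v | c t < v ⟨j, Finset.mem_singleton_self j⟩} with hSdef
    have hSm : MeasurableSet S := measurableSet_lt measurable_const (measurable_pi_apply _)
    have hSgt : ∀ v ∈ S, ∀ j' : ({j} : Finset ℕ), x₀ < v j' := by
      intro v hv j'
      have hj' : j' = ⟨j, Finset.mem_singleton_self j⟩ :=
        Subtype.ext (Finset.mem_singleton.mp j'.2)
      rw [hj']
      exact lt_trans (hcx t ht) hv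
    have hrd := hRD i {j} (Finset.singleton_nonempty j) hiJ (c s) (hcx s hs) S hSm hSgt
    have e0 : {ω | c s < projA A (X i ω) ∧
        (fun j' : ({j} : Finset ℕ) => projA A (X (j' : ℕ) ω)) ∈ S} =
        {ω | c s < Z i ω ∧ c t < Z j ω} := rfl
    have e0' : {ω | (fun j' : ({j} : Finset ℕ) => projA A (X (j' : ℕ) ω)) ∈ S} =
        {ω | c t < Z j ω} := rfl
    rw [e0, e0'] at hrd
    have e1 : {ω | X i ω ∈ c s • A ∧ X j ω ∈ c t • A} =
        {ω | c s < Z i ω ∧ c t < Z j ω} := by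
      ext ω
      exact and_congr (mem_smul_iff_lt_projA hA (hXnn i ω) (hcpos s))
        (mem_smul_iff_lt_projA hA (hXnn j ω) (hcpos t))
    have e2 : {ω | c s < Z i ω} = {ω | X i ω ∈ c s • A} := (hZset i _ (hcx s hs)).symm
    have e3 : {ω | c t < Z j ω} = {ω | X j ω ∈ c t • A} := (hZset j _ (hcx t ht)).symm
    rw [e1]
    calc P {ω | c s < Z i ω ∧ c t < Z j ω}
        ≤ ENNReal.ofReal K * P {ω | c s < Z i ω} * P {ω | c t < Z j ω} :=
          toReal3 hK.le (measure_ne_top P _) (measure_ne_top P _) (measure_ne_top P _)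
            (by
              have e4 : {ω | c s < projA A (X i ω)} = {ω | c s < Z i ω} := rfl
              rw [e4] at hrd
              exact hrd)
      _ = ENNReal.ofReal K * h s * h t := by
          rw [e2, hPh i s, e3, hPh j t]
  -- independence setup
  set Xv : Ω → (ℕ → Fin d → ℝ) := fun ω i => X i ω with hXvdef
  set τv : Ω → (ℕ → ℝ) := fun ω i => τ i ω with hτvdef
  have hXvm : Measurable Xv := measurable_pi_lambda _ hXmeas
  have hτvm : Measurable τv := measurable_pi_lambda _ hτmeas
  set Q : Measure (ℕ → Fin d → ℝ) := P.map Xv with hQdef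
  set R : Measure (ℕ → ℝ) := P.map τv with hRdef
  haveI : IsProbabilityMeasure Q := Measure.isProbabilityMeasure_map hXvm.aemeasurable
  haveI : IsProbabilityMeasure R := Measure.isProbabilityMeasure_map hτvm.aemeasurable
  have hprodlaw : P.map (fun ω => (τv ω, Xv ω)) = R.prod Q :=
    (indepFun_iff_map_prod_eq_prod_map_map hτvm.aemeasurable hXvm.aemeasurable).mp hindep.symm
  have hjoint : ∀ W : Set ((ℕ → ℝ) × (ℕ → Fin d → ℝ)), MeasurableSet W →
      P ((fun ω => (τv ω, Xv ω)) ⁻¹' W) = ∫⁻ b, Q (Prod.mk b ⁻¹' W) ∂ R := by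
    intro W hW
    rw [← Measure.map_apply (hτvm.prodMk hXvm) hW, hprodlaw, Measure.prod_apply hW]
  have hQ1 : ∀ (i) (u : ℝ), 0 < u →
      Q {a : ℕ → Fin d → ℝ | a i ∈ u • A} = P {ω | X i ω ∈ u • A} := by
    intro i u hu
    rw [hQdef, Measure.map_apply hXvm
      (show MeasurableSet {a : ℕ → Fin d → ℝ | a i ∈ u • A} from
        (measurable_pi_apply i) (hA.1.smul₀ hu.ne').measurableSet)]
    rfl
  have hQ2 : ∀ (i j) (u v : ℝ), 0 < u → 0 < v →
      Q {a : ℕ → Fin d → ℝ | a i ∈ u • A ∧ a j ∈ v • A} =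
        P {ω | X i ω ∈ u • A ∧ X j ω ∈ v • A} := by
    intro i j u v hu hv
    rw [hQdef, Measure.map_apply hXvm
      (show MeasurableSet {a : ℕ → Fin d → ℝ | a i ∈ u • A ∧ a j ∈ v • A} from
        (((measurable_pi_apply i) (hA.1.smul₀ hu.ne').measurableSet).inter
          ((measurable_pi_apply j) (hA.1.smul₀ hv.ne').measurableSet)))]
    rfl
  -- indicator tail
  set g : ℝ → ℝ≥0∞ := fun s => (Icc (0:ℝ) T).indicator h s with hgdef
  have hgm : Measurable g := hhm.indicator measurableSet_Icc
  have haeR : ∀ i : ℕ, ∀ᵐ b ∂ R, 0 ≤ b i := by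
    intro i
    rw [hRdef, ae_map_iff hτvm.aemeasurable
      (measurableSet_le measurable_const (measurable_pi_apply i))]
    exact ae_of_all _ fun ω => hτnn i ω
  -- pairwise event sets in the product space
  set W2 : ℕ → ℕ → Set ((ℕ → ℝ) × (ℕ → Fin d → ℝ)) := fun i j =>
    {p | (p.1 i ≤ T ∧ Real.exp (-(r * p.1 i)) • p.2 i ∈ x • A) ∧
         (p.1 j ≤ T ∧ Real.exp (-(r * p.1 j)) • p.2 j ∈ x • A)} with hW2def
  have hW2m : ∀ i j, MeasurableSet (W2 i j) := by
    intro i j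
    have hone : ∀ k : ℕ, MeasurableSet
        {p : (ℕ → ℝ) × (ℕ → Fin d → ℝ) |
          p.1 k ≤ T ∧ Real.exp (-(r * p.1 k)) • p.2 k ∈ x • A} := by
      intro k
      have h1 : Measurable fun p : (ℕ → ℝ) × (ℕ → Fin d → ℝ) => p.1 k :=
        (measurable_pi_apply k).comp measurable_fst
      have h2 : Measurable fun p : (ℕ → ℝ) × (ℕ → Fin d → ℝ) =>
          Real.exp (-(r * p.1 k)) • p.2 k :=
        ((h1.const_mul r).neg.exp).smul ((measurable_pi_apply k).comp measurable_snd)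
      exact (measurableSet_le h1 measurable_const).inter (h2 hxA_open.measurableSet)
    exact (hone i).inter (hone j)
  have hsec : ∀ i j, i ≠ j → ∀ b : ℕ → ℝ, 0 ≤ b i → 0 ≤ b j →
      Q (Prod.mk b ⁻¹' W2 i j) ≤ ENNReal.ofReal K * g (b i) * g (b j) := by
    intro i j hij b hbi hbj
    by_cases hT2 : b i ≤ T ∧ b j ≤ T
    · have hsec_eq : Prod.mk b ⁻¹' W2 i j =
          {a : ℕ → Fin d → ℝ | a i ∈ c (b i) • A ∧ a j ∈ c (b j) • A} := by
        ext a
        simp only [hW2def, Set.mem_preimage, Set.mem_setOf_eq]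
        rw [hsmul_iff (b i) (a i), hsmul_iff (b j) (a j)]
        constructor
        · rintro ⟨⟨_, h1⟩, ⟨_, h2⟩⟩; exact ⟨h1, h2⟩
        · rintro ⟨h1, h2⟩; exact ⟨⟨hT2.1, h1⟩, ⟨hT2.2, h2⟩⟩
      rw [hsec_eq, hQ2 i j _ _ (hcpos (b i)) (hcpos (b j))]
      have hgi : g (b i) = h (b i) := Set.indicator_of_mem (Set.mem_Icc.mpr ⟨hbi, hT2.1⟩) h
      have hgj : g (b j) = h (b j) := Set.indicator_of_mem (Set.mem_Icc.mpr ⟨hbj, hT2.2⟩) h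
      rw [hgi, hgj]
      exact hpair i j hij _ _ hbi hbj
    · have : Prod.mk b ⁻¹' W2 i j = ∅ := by
        ext a
        simp only [hW2def, Set.mem_preimage, Set.mem_setOf_eq, Set.mem_empty_iff_false,
          iff_false]
        rintro ⟨⟨h1, _⟩, ⟨h2, _⟩⟩
        exact hT2 ⟨h1, h2⟩
      rw [this, measure_empty]
      exact zero_le
  have hPEpair : ∀ i j, i ≠ j → P (E i ∩ E j) ≤
      ENNReal.ofReal K * ∫⁻ b, g (b i) * g (b j) ∂ R := by
    intro i j hij
    have hpre : E i ∩ E j = (fun ω => (τv ω, Xv ω)) ⁻¹' W2 i j := rfl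
    rw [hpre, hjoint _ (hW2m i j)]
    have hmeas2 : Measurable fun b : ℕ → ℝ => g (b i) * g (b j) :=
      (hgm.comp (measurable_pi_apply i)).mul (hgm.comp (measurable_pi_apply j))
    calc ∫⁻ b, Q (Prod.mk b ⁻¹' W2 i j) ∂ R
        ≤ ∫⁻ b, ENNReal.ofReal K * (g (b i) * g (b j)) ∂ R := by
          refine lintegral_mono_ae ?_
          filter_upwards [haeR i, haeR j] with b h1 h2
          rw [← mul_assoc]
          exact hsec i j hij b h1 h2
      _ = ENNReal.ofReal K * ∫⁻ b, g (b i) * g (b j) ∂ R :=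
          lintegral_const_mul _ hmeas2
  have hRpair : ∀ i j : ℕ, ∫⁻ b, g (b i) * g (b j) ∂ R
      = ∫⁻ q, g q.1 * g q.2 ∂(P.map fun ω => (τ i ω, τ j ω)) := by
    intro i j
    rw [hRdef, lintegral_map (show Measurable fun b : ℕ → ℝ => g (b i) * g (b j) from
        (hgm.comp (measurable_pi_apply i)).mul (hgm.comp (measurable_pi_apply j))) hτvm,
      lintegral_map (show Measurable fun q : ℝ × ℝ => g q.1 * g q.2 from
        (hgm.comp measurable_fst).mul (hgm.comp measurable_snd))
        ((hτmeas i).prodMk (hτmeas j))]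
  -- sum over off-diagonal pairs = second factorial moment measure
  have hsum2 : (∑' p : {p : ℕ × ℕ // p.1 ≠ p.2},
      ∫⁻ q, g q.1 * g q.2 ∂(P.map fun ω => (τ p.1.1 ω, τ p.1.2 ω)))
      = ∫⁻ q, g q.1 * g q.2 ∂(secondFactorial P τ) := by
    rw [secondFactorial, lintegral_sum_measure]
  -- Assumption 3.2 comparison
  set S₂ : Set (ℝ × ℝ) := Icc (0:ℝ) T ×ˢ Icc (0:ℝ) T with hS₂def
  have hS₂m : MeasurableSet S₂ := measurableSet_Icc.prod measurableSet_Icc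
  have hgg : (fun q : ℝ × ℝ => g q.1 * g q.2)
      = S₂.indicator fun q => h q.1 * h q.2 := by
    funext q
    exact (indicator_prod_mul q).symm
  have hres : ∫⁻ q, g q.1 * g q.2 ∂(secondFactorial P τ) ≤
      ENNReal.ofReal C * ∫⁻ q, g q.1 * g q.2 ∂(nuProd P τ) := by
    rw [hgg, lintegral_indicator hS₂m, lintegral_indicator hS₂m]
    have hle : (secondFactorial P τ).restrict S₂ ≤
        (ENNReal.ofReal C • nuProd P τ).restrict S₂ := by
      refine Measure.le_iff.2 fun B hB => ?_
      rw [Measure.restrict_apply hB, Measure.restrict_apply hB, Measure.smul_apply,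
        smul_eq_mul]
      exact h32 _ (hB.inter hS₂m) Set.inter_subset_right
    calc ∫⁻ q in S₂, h q.1 * h q.2 ∂(secondFactorial P τ)
        ≤ ∫⁻ q in S₂, h q.1 * h q.2 ∂(ENNReal.ofReal C • nuProd P τ) :=
          lintegral_mono' hle le_rfl
      _ = ENNReal.ofReal C * ∫⁻ q in S₂, h q.1 * h q.2 ∂(nuProd P τ) := by
          rw [Measure.restrict_smul, lintegral_smul_measure, smul_eq_mul]
  -- nuProd integral factorizes
  have hnu : ∫⁻ q, g q.1 * g q.2 ∂(nuProd P τ)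
      = (∑' i : ℕ, ∫⁻ s, g s ∂(P.map (τ i))) ^ 2 := by
    rw [nuProd, lintegral_sum_measure]
    have hfac : ∀ p : ℕ × ℕ,
        ∫⁻ q, g q.1 * g q.2 ∂(mprod (P.map (τ p.1)) (P.map (τ p.2)))
        = (∫⁻ s, g s ∂(P.map (τ p.1))) * ∫⁻ s, g s ∂(P.map (τ p.2)) := by
      intro p
      haveI : IsProbabilityMeasure (P.map (τ p.2)) :=
        Measure.isProbabilityMeasure_map (hτmeas p.2).aemeasurable
      rw [mprod_eq_prod, lintegral_prod_mul hgm.aemeasurable hgm.aemeasurable]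
    rw [tsum_congr hfac, ENNReal.tsum_prod']
    have : ∀ i : ℕ, (∑' j : ℕ, (∫⁻ s, g s ∂(P.map (τ i))) * ∫⁻ s, g s ∂(P.map (τ j)))
        = (∫⁻ s, g s ∂(P.map (τ i))) * ∑' j : ℕ, ∫⁻ s, g s ∂(P.map (τ j)) := fun i =>
      ENNReal.tsum_mul_left
    rw [tsum_congr this, ENNReal.tsum_mul_right, sq]
  -- single-index comparison
  have hIi : ∀ i : ℕ, ∫⁻ s, g s ∂(P.map (τ i)) ≤ P (E i) := by
    intro i
    set W1 : Set ((ℕ → ℝ) × (ℕ → Fin d → ℝ)) :=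
      {p | p.1 i ≤ T ∧ Real.exp (-(r * p.1 i)) • p.2 i ∈ x • A} with hW1def
    have hW1m : MeasurableSet W1 := by
      have h1 : Measurable fun p : (ℕ → ℝ) × (ℕ → Fin d → ℝ) => p.1 i :=
        (measurable_pi_apply i).comp measurable_fst
      have h2 : Measurable fun p : (ℕ → ℝ) × (ℕ → Fin d → ℝ) =>
          Real.exp (-(r * p.1 i)) • p.2 i :=
        ((h1.const_mul r).neg.exp).smul ((measurable_pi_apply i).comp measurable_snd)
      exact (measurableSet_le h1 measurable_const).inter (h2 hxA_open.measurableSet)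
    have hpre : E i = (fun ω => (τv ω, Xv ω)) ⁻¹' W1 := rfl
    have hmap : ∫⁻ s, g s ∂(P.map (τ i)) = ∫⁻ b, g (b i) ∂ R := by
      rw [lintegral_map hgm (hτmeas i), hRdef,
        lintegral_map (show Measurable fun b : ℕ → ℝ => g (b i) from
          hgm.comp (measurable_pi_apply i)) hτvm]
    rw [hmap, hpre, hjoint _ hW1m]
    refine lintegral_mono_ae ?_
    filter_upwards [haeR i] with b hbi
    by_cases hbT : b i ≤ T
    · have hgi : g (b i) = h (b i) := Set.indicator_of_mem (Set.mem_Icc.mpr ⟨hbi, hbT⟩) h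
      have hsec1 : Prod.mk b ⁻¹' W1 = {a : ℕ → Fin d → ℝ | a i ∈ c (b i) • A} := by
        ext a
        simp only [hW1def, Set.mem_preimage, Set.mem_setOf_eq]
        rw [hsmul_iff (b i) (a i)]
        exact ⟨fun hp => hp.2, fun hp => ⟨hbT, hp⟩⟩
      rw [hgi, hsec1, hQ1 i _ (hcpos (b i)), hPh i (b i)]
    · have : g (b i) = 0 :=
        Set.indicator_of_notMem (fun hmem => hbT hmem.2) h
      rw [this]
      exact zero_le
  -- pointwise counting bound
  have hJle : ∀ ω, Jcount r X τ A T x ω * (Jcount r X τ A T x ω - 1)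
      ≤ ∑' p : {p : ℕ × ℕ // p.1 ≠ p.2},
          (E p.1.1).indicator (fun _ => (1:ℝ≥0∞)) ω * (E p.1.2).indicator (fun _ => 1) ω := by
    intro ω
    have hc1 : ∀ i, (E i).indicator (fun _ => (1:ℝ≥0∞)) ω ≤ 1 := by
      intro i
      by_cases hw : ω ∈ E i <;> simp [Set.indicator_apply, hw]
    exact count_pairs_le hc1
  -- final assembly
  calc ∫⁻ ω, Jcount r X τ A T x ω * (Jcount r X τ A T x ω - 1) ∂P
      ≤ ∫⁻ ω, ∑' p : {p : ℕ × ℕ // p.1 ≠ p.2},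
          (E p.1.1).indicator (fun _ => (1:ℝ≥0∞)) ω * (E p.1.2).indicator (fun _ => 1) ω ∂P :=
        lintegral_mono hJle
    _ = ∑' p : {p : ℕ × ℕ // p.1 ≠ p.2},
          ∫⁻ ω, (E p.1.1).indicator (fun _ => (1:ℝ≥0∞)) ω * (E p.1.2).indicator (fun _ => 1) ω ∂P :=
        lintegral_tsum fun p =>
          (((measurable_const.indicator (hmE p.1.1)).mul
            (measurable_const.indicator (hmE p.1.2))).aemeasurable)
    _ = ∑' p : {p : ℕ × ℕ // p.1 ≠ p.2}, P (E p.1.1 ∩ E p.1.2) := by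
        refine tsum_congr fun p => ?_
        have hind : (fun ω => (E p.1.1).indicator (fun _ => (1:ℝ≥0∞)) ω *
            (E p.1.2).indicator (fun _ => 1) ω)
            = (E p.1.1 ∩ E p.1.2).indicator fun _ => (1:ℝ≥0∞) := by
          funext ω
          by_cases h1 : ω ∈ E p.1.1 <;> by_cases h2 : ω ∈ E p.1.2 <;>
            simp [Set.indicator_apply, h1, h2]
        rw [hind, lintegral_indicator ((hmE p.1.1).inter (hmE p.1.2)), setLIntegral_one]
    _ ≤ ∑' p : {p : ℕ × ℕ // p.1 ≠ p.2},
          ENNReal.ofReal K * ∫⁻ q, g q.1 * g q.2 ∂(P.map fun ω => (τ p.1.1 ω, τ p.1.2 ω)) := by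
        refine ENNReal.tsum_le_tsum fun p => ?_
        have := hPEpair p.1.1 p.1.2 p.2
        rwa [hRpair p.1.1 p.1.2] at this
    _ = ENNReal.ofReal K * ∑' p : {p : ℕ × ℕ // p.1 ≠ p.2},
          ∫⁻ q, g q.1 * g q.2 ∂(P.map fun ω => (τ p.1.1 ω, τ p.1.2 ω)) := ENNReal.tsum_mul_left
    _ = ENNReal.ofReal K * ∫⁻ q, g q.1 * g q.2 ∂(secondFactorial P τ) := by rw [hsum2]
    _ ≤ ENNReal.ofReal K * (ENNReal.ofReal C * ∫⁻ q, g q.1 * g q.2 ∂(nuProd P τ)) :=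
        mul_le_mul_right hres _
    _ = ENNReal.ofReal (C * K) * (∑' i : ℕ, ∫⁻ s, g s ∂(P.map (τ i))) ^ 2 := by
        rw [hnu, ENNReal.ofReal_mul hC]
        ring
    _ ≤ ENNReal.ofReal (C * K) * (∑' i : ℕ, P (E i)) ^ 2 :=
        mul_le_mul_right (pow_le_pow_left' (ENNReal.tsum_le_tsum hIi) 2) _
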